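/- Let Z ⊆ ℝ^d be a nonempty finite set with R := max_{z∈Z} ‖z‖₂ > 0, let r be the rank of the matrix whose rows are the elements of Z, let ν > 0 and L_k > 0, and let κ: Z → [0,∞) with max_{z∈Z} κ(z) > 0 (interpreted as the kernel diagonal values κ(z) = k(z,z)). Define the metric ρ(z,z') := ν·√(8/3)·min( 2·max_{w∈Z} √(κ(w)), √(2·L_k·‖z − z'‖₂) ) on Z, and set c := ν·√(32·R·L_k/3) and D := min( c, ν·√(32/3)·max_{w∈Z} √(κ(w)) ). Then: (i) for every u > 0, the u-covering number of Z with respect to ρ satisfies N(u; Z, ρ) ≤ (1 + c²/u²)^r; (ii) the diameter of Z with respect to ρ is at most D; and (iii) the entropy integral satisfies J(Z, ρ) := ∫₀^{diam(Z,ρ)} √(log(1 + N(u; Z, ρ))) du ≤ D·√(2·r·log(√3·e·c/D)). -/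

import Mathlib

open Finset

noncomputable section

section Aux

open MeasureTheory Metric Module intervalIntegral
open scoped ENNReal

/-- maximal separated subset gives a cover -/
lemma exists_maximal_sep {α : Type*} [MetricSpace α] (Z : Finset α) {ε : ℝ} (hε : 0 ≤ ε) :
    ∃ C : Finset α, C ⊆ Z ∧ (∀ c ∈ C, ∀ c' ∈ C, c ≠ c' → ε < dist c c') ∧
      ∀ z ∈ Z, ∃ c ∈ C, dist z c ≤ ε := by
  classical
  obtain ⟨C, hC, hmax⟩ := Finset.exists_max_image
    (Z.powerset.filter fun C => ∀ c ∈ C, ∀ c' ∈ C, c ≠ c' → ε < dist c c')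
    Finset.card
    ⟨∅, by simp⟩
  simp only [Finset.mem_filter, Finset.mem_powerset] at hC
  refine ⟨C, hC.1, hC.2, ?_⟩
  intro z hz
  by_contra hcon
  push_neg at hcon
  have hzC : z ∉ C := fun h => absurd (dist_self z ▸ hcon z h) (by simp [hε])
  have hmem : insert z C ∈ Z.powerset.filter
      fun C => ∀ c ∈ C, ∀ c' ∈ C, c ≠ c' → ε < dist c c' := by
    simp only [Finset.mem_filter, Finset.mem_powerset]
    refine ⟨Finset.insert_subset hz hC.1, ?_⟩
    intro a ha b hb hab
    rcases Finset.mem_insert.1 ha with ha' | ha'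
    · subst ha'
      rcases Finset.mem_insert.1 hb with hb' | hb'
      · exact absurd hb'.symm hab
      · exact hcon b hb'
    · rcases Finset.mem_insert.1 hb with hb' | hb'
      · subst hb'; rw [dist_comm]; exact hcon a ha'
      · exact hC.2 a ha' b hb' hab
  have := hmax _ hmem
  rw [Finset.card_insert_of_notMem hzC] at this
  omega

/-- volumetric packing bound -/
lemma packing_card_le {F : Type*} [NormedAddCommGroup F] [InnerProductSpace ℝ F]
    [FiniteDimensional ℝ F] [MeasurableSpace F] [BorelSpace F] (C : Finset F) {ε Rr : ℝ} (hε : 0 < ε) (hRr : 0 ≤ Rr)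
    (hsep : ∀ c ∈ C, ∀ c' ∈ C, c ≠ c' → ε < dist c c')
    (hbound : ∀ c ∈ C, ‖c‖ ≤ Rr) :
    (C.card : ℝ) ≤ ((Rr + ε / 2) / (ε / 2)) ^ finrank ℝ F := by
  have hB0 : 0 < volume (ball (0 : F) 1) := measure_ball_pos _ _ one_pos
  have hBtop : volume (ball (0 : F) 1) < ⊤ := measure_ball_lt_top
  have hdisj : (C : Set F).PairwiseDisjoint fun c => ball c (ε / 2) := by
    intro a ha b hb hab
    apply Metric.ball_disjoint_ball
    have := hsep a ha b hb hab
    linarith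
  have hsub : ∀ c ∈ C, ball c (ε / 2) ⊆ ball (0 : F) (Rr + ε / 2) := by
    intro c hc x hx
    simp only [mem_ball] at *
    calc dist x 0 ≤ dist x c + dist c 0 := dist_triangle _ _ _
    _ < ε / 2 + Rr := by
        have : dist c 0 ≤ Rr := by simpa [dist_eq_norm] using hbound c hc
        linarith
    _ = Rr + ε / 2 := by ring
  have hunion : volume (⋃ c ∈ C, ball c (ε / 2)) = ∑ c ∈ C, volume (ball c (ε / 2)) :=
    measure_biUnion_finset hdisj fun c _ => measurableSet_ball
  have hballs : ∀ c : F, volume (ball c (ε / 2)) =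
      ENNReal.ofReal ((ε / 2) ^ finrank ℝ F) * volume (ball (0 : F) 1) :=
    fun c => Measure.addHaar_ball_of_pos volume c (by linarith)
  have hbig : volume (ball (0 : F) (Rr + ε / 2)) =
      ENNReal.ofReal ((Rr + ε / 2) ^ finrank ℝ F) * volume (ball (0 : F) 1) :=
    Measure.addHaar_ball_of_pos volume 0 (by linarith)
  have hle : (C.card : ℝ≥0∞) * (ENNReal.ofReal ((ε / 2) ^ finrank ℝ F) * volume (ball (0 : F) 1))
      ≤ ENNReal.ofReal ((Rr + ε / 2) ^ finrank ℝ F) * volume (ball (0 : F) 1) := by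
    rw [← hbig]
    calc (C.card : ℝ≥0∞) * (ENNReal.ofReal ((ε / 2) ^ finrank ℝ F) * volume (ball (0 : F) 1))
        = ∑ c ∈ C, volume (ball c (ε / 2)) := by
          rw [Finset.sum_congr rfl fun c _ => hballs c, Finset.sum_const, nsmul_eq_mul]
      _ = volume (⋃ c ∈ C, ball c (ε / 2)) := hunion.symm
      _ ≤ volume (ball (0 : F) (Rr + ε / 2)) :=
          measure_mono (Set.iUnion₂_subset hsub)
  rw [← mul_assoc] at hle
  have hle2 : (C.card : ℝ≥0∞) * ENNReal.ofReal ((ε / 2) ^ finrank ℝ F)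
      ≤ ENNReal.ofReal ((Rr + ε / 2) ^ finrank ℝ F) :=
    (ENNReal.mul_le_mul_iff_left hB0.ne' hBtop.ne).1 hle
  have hε2 : (0:ℝ) < (ε/2) ^ finrank ℝ F := by positivity
  have hreal : (C.card : ℝ) * (ε / 2) ^ finrank ℝ F ≤ (Rr + ε / 2) ^ finrank ℝ F := by
    have := hle2
    rw [← ENNReal.ofReal_natCast, ← ENNReal.ofReal_mul (by positivity)] at this
    exact (ENNReal.ofReal_le_ofReal_iff (by positivity)).1 this
  rw [div_pow, le_div_iff₀ hε2]
  exact hreal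

lemma rank_eq_finrank_span_finset {d : ℕ} (Z : Finset (EuclideanSpace ℝ (Fin d))) :
    (Matrix.of fun (z : {z // z ∈ Z}) (j : Fin d) =>
      (z.1 : EuclideanSpace ℝ (Fin d)) j).rank
      = finrank ℝ (Submodule.span ℝ (Z : Set (EuclideanSpace ℝ (Fin d)))) := by
  rw [Matrix.rank_eq_finrank_span_row]
  set φ := (WithLp.linearEquiv 2 ℝ (Fin d → ℝ) :
    EuclideanSpace ℝ (Fin d) ≃ₗ[ℝ] (Fin d → ℝ))
  have himg : Set.range (Matrix.of fun (z : {z // z ∈ Z}) (j : Fin d) =>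
      (z.1 : EuclideanSpace ℝ (Fin d)) j) = φ '' (Z : Set (EuclideanSpace ℝ (Fin d))) := by
    ext x
    constructor
    · rintro ⟨z, rfl⟩
      exact ⟨z.1, z.2, rfl⟩
    · rintro ⟨z, hz, rfl⟩
      exact ⟨⟨z, hz⟩, rfl⟩
  rw [Matrix.row, himg]
  have := LinearEquiv.finrank_map_eq φ (Submodule.span ℝ (Z : Set (EuclideanSpace ℝ (Fin d))))
  rwa [Submodule.map_span] at this

lemma exists_cover {d : ℕ} (Z : Finset (EuclideanSpace ℝ (Fin d))) {Rr ε : ℝ}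
    (hRr : 0 < Rr) (hε : 0 < ε) (hb : ∀ z ∈ Z, ‖z‖ ≤ Rr) :
    ∃ C : Finset (EuclideanSpace ℝ (Fin d)), C ⊆ Z ∧
      (∀ z ∈ Z, ∃ c ∈ C, dist z c ≤ ε) ∧
      (C.card : ℝ) ≤ (1 + 2 * Rr / ε) ^
        finrank ℝ (Submodule.span ℝ (Z : Set (EuclideanSpace ℝ (Fin d)))) := by
  classical
  obtain ⟨C, hCZ, hsep, hcov⟩ := exists_maximal_sep Z hε.le
  refine ⟨C, hCZ, hcov, ?_⟩
  set S := Submodule.span ℝ (Z : Set (EuclideanSpace ℝ (Fin d)))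
  have hmemS : ∀ c ∈ C, c ∈ S := fun c hc => Submodule.subset_span (hCZ hc)
  let e : C → S := fun c => ⟨c.1, hmemS c.1 c.2⟩
  have hinj : Function.Injective e := fun a b hab => by
    apply Subtype.ext
    exact congrArg (fun x : S => (x : EuclideanSpace ℝ (Fin d))) hab
  let C' : Finset S := C.attach.image e
  have hcard : C'.card = C.card := by
    rw [Finset.card_image_of_injective _ hinj, Finset.card_attach]
  have hsep' : ∀ c ∈ C', ∀ c' ∈ C', c ≠ c' → ε < dist c c' := by
    intro a ha b hb hab
    simp only [C', Finset.mem_image] at ha hb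
    obtain ⟨a0, -, rfl⟩ := ha
    obtain ⟨b0, -, rfl⟩ := hb
    have : dist (e a0) (e b0) = dist a0.1 b0.1 := rfl
    rw [this]
    exact hsep a0.1 a0.2 b0.1 b0.2 (fun h => hab (by simp [e, h]))
  have hbound' : ∀ c ∈ C', ‖c‖ ≤ Rr := by
    intro a ha
    simp only [C', Finset.mem_image] at ha
    obtain ⟨a0, -, rfl⟩ := ha
    exact hb a0.1 (hCZ a0.2)
  have := packing_card_le C' hε hRr.le hsep' hbound'
  rw [hcard] at this
  refine this.trans (le_of_eq ?_)
  congr 1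
  field_simp
  ring

lemma intervalIntegrable_log0 {D : ℝ} (hD : 0 < D) :
    IntervalIntegrable Real.log volume 0 D := by
  rw [intervalIntegrable_iff_integrableOn_Ioc_of_le hD.le]
  have hgint : IntegrableOn (fun u : ℝ => 2 * u ^ (-(1/2) : ℝ) + |Real.log D|)
      (Set.Ioc 0 D) volume := by
    apply Integrable.add
    · have := (intervalIntegrable_rpow' (a := 0) (b := D) (r := -(1/2)) (by norm_num))
      rw [intervalIntegrable_iff_integrableOn_Ioc_of_le hD.le] at this
      exact this.const_mul 2
    · exact integrableOn_const (by simp [Real.volume_Ioc])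
  refine Integrable.mono' hgint Real.measurable_log.aestronglyMeasurable ?_
  filter_upwards [ae_restrict_mem measurableSet_Ioc] with u hu
  have hu0 : 0 < u := hu.1
  have hrp : (0:ℝ) < u ^ (-(1/2) : ℝ) := Real.rpow_pos_of_pos hu0 _
  rcases le_or_gt u 1 with h1 | h1
  · have hlog : Real.log u ≤ 0 := Real.log_nonpos hu0.le h1
    rw [Real.norm_eq_abs, abs_of_nonpos hlog]
    have key : -Real.log u ≤ 2 * u ^ (-(1/2) : ℝ) := by
      have h2 : Real.log (u ^ (-(1/2) : ℝ)) = -(1/2) * Real.log u :=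
        Real.log_rpow hu0 _
      have h3 : Real.log (u ^ (-(1/2) : ℝ)) ≤ u ^ (-(1/2) : ℝ) - 1 :=
        Real.log_le_sub_one_of_pos hrp
      nlinarith
    nlinarith [abs_nonneg (Real.log D)]
  · have hlog : 0 ≤ Real.log u := Real.log_nonneg h1.le
    rw [Real.norm_eq_abs, abs_of_nonneg hlog]
    have : Real.log u ≤ Real.log D := Real.log_le_log hu0 hu.2
    have : Real.log u ≤ |Real.log D| := this.trans (le_abs_self _)
    nlinarith

lemma integral_log0 {D : ℝ} (hD : 0 < D) :
    ∫ u in (0:ℝ)..D, Real.log u = D * Real.log D - D := by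
  have hcont : ContinuousOn (fun u : ℝ => u * Real.log u - u) (Set.Icc 0 D) :=
    (Real.continuous_mul_log.sub continuous_id).continuousOn
  have hderiv : ∀ x ∈ Set.Ioo (0:ℝ) D,
      HasDerivAt (fun u : ℝ => u * Real.log u - u) (Real.log x) x := by
    intro x hx
    have h1 := Real.hasDerivAt_mul_log hx.1.ne'
    have := h1.sub (hasDerivAt_id x)
    have h3 : Real.log x + 1 - 1 = Real.log x := by ring
    rw [h3] at this
    exact this
  have := integral_eq_sub_of_hasDerivAt_of_le hD.le hcont hderiv (intervalIntegrable_log0 hD)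
  simpa using this

lemma sqrt_le_half_add {A x : ℝ} (hA : 0 < A) (hx : 0 ≤ x) :
    Real.sqrt x ≤ Real.sqrt A / 2 + x / (2 * Real.sqrt A) := by
  have hsA : 0 < Real.sqrt A := Real.sqrt_pos.2 hA
  have h1 : Real.sqrt x * Real.sqrt x = x := Real.mul_self_sqrt hx
  have h2 : Real.sqrt A * Real.sqrt A = A := Real.mul_self_sqrt hA.le
  have h3 : 0 ≤ (Real.sqrt x - Real.sqrt A)^2 := sq_nonneg _
  rw [div_add_div _ _ (by norm_num) (by positivity), le_div_iff₀ (by positivity)]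
  nlinarith

lemma one_add_pow_le {x : ℝ} (hx : 0 ≤ x) {m : ℕ} (hm : 1 ≤ m) :
    1 + (1 + x) ^ m ≤ (2 + x) ^ m := by
  induction m with
  | zero => omega
  | succ n ih =>
    rcases Nat.eq_or_lt_of_le hm with h | h
    · have : n = 0 := by omega
      subst this; simp; linarith
    · have hn : 1 ≤ n := by omega
      have := ih hn
      have h1 : (0:ℝ) < 1 + x := by linarith
      have h2 : (0:ℝ) ≤ (1+x)^n := by positivity
      have h3 : (0:ℝ) ≤ (2+x)^n := by positivity
      calc 1 + (1 + x) ^ (n+1) = (1+x) * (1+x)^n + 1 := by ring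
        _ ≤ (2+x) * ((2+x)^n) := by nlinarith
        _ = (2+x)^(n+1) := by ring

end Aux

open MeasureTheory Metric Module intervalIntegral in
set_option maxHeartbeats 1000000 in
theorem stmt14 {d : ℕ} (Z : Finset (EuclideanSpace ℝ (Fin d))) (hZ : Z.Nonempty)
    (R : ℝ) (hR : R = Z.sup' hZ fun z => ‖z‖) (hRpos : 0 < R)
    (r : ℕ)
    (hr : r = (Matrix.of fun (z : {z // z ∈ Z}) (j : Fin d) =>
      (z.1 : EuclideanSpace ℝ (Fin d)) j).rank)
    (ν Lk : ℝ) (hν : 0 < ν) (hLk : 0 < Lk)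
    (κ : EuclideanSpace ℝ (Fin d) → ℝ) (hκ : ∀ z ∈ Z, 0 ≤ κ z)
    (hκpos : 0 < Z.sup' hZ fun z => κ z)
    (ρ : EuclideanSpace ℝ (Fin d) → EuclideanSpace ℝ (Fin d) → ℝ)
    (hρ : ∀ z z', ρ z z' = ν * Real.sqrt (8/3) *
      min (2 * Z.sup' hZ fun v => Real.sqrt (κ v)) (Real.sqrt (2 * Lk * ‖z - z'‖)))
    (c D : ℝ) (hc : c = ν * Real.sqrt (32 * R * Lk / 3))
    (hD : D = min c (ν * Real.sqrt (32/3) * Z.sup' hZ fun v => Real.sqrt (κ v)))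
    (N : ℝ → ℕ)
    (hN : ∀ u, N u = sInf {k : ℕ |
      ∃ C : Finset (EuclideanSpace ℝ (Fin d)), C ⊆ Z ∧ C.card = k ∧
        ∀ z ∈ Z, ∃ c' ∈ C, ρ z c' ≤ u})
    (diam : ℝ) (hdiam : IsGreatest {t : ℝ | ∃ z ∈ Z, ∃ z' ∈ Z, t = ρ z z'} diam) :
    (∀ u > 0, (N u : ℝ) ≤ (1 + c^2 / u^2) ^ r) ∧
    diam ≤ D ∧
    (∫ u in (0:ℝ)..diam, Real.sqrt (Real.log (1 + (N u : ℝ)))) ≤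
      D * Real.sqrt (2 * (r : ℝ) * Real.log (Real.sqrt 3 * Real.exp 1 * c / D)) := by
  classical
  set sκ := Z.sup' hZ fun v => Real.sqrt (κ v) with hsκdef
  have hsκpos : 0 < sκ := by
    obtain ⟨z, hz, hzval⟩ := Finset.exists_mem_eq_sup' hZ fun z => κ z
    have hκz : 0 < κ z := by rw [← hzval]; exact hκpos
    exact lt_of_lt_of_le (Real.sqrt_pos.2 hκz)
      (Finset.le_sup' (f := fun v => Real.sqrt (κ v)) hz)
  have hc0 : 0 < c := by
    rw [hc]; exact mul_pos hν (Real.sqrt_pos.2 (by positivity))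
  have hD0 : 0 < D := by
    rw [hD]
    exact lt_min hc0 (mul_pos (mul_pos hν (Real.sqrt_pos.2 (by norm_num))) hsκpos)
  have hDc : D ≤ c := by rw [hD]; exact min_le_left _ _
  have hbnd : ∀ z ∈ Z, ‖z‖ ≤ R := fun z hz => hR ▸ Finset.le_sup' _ hz
  have hρself : ∀ z, ρ z z = 0 := by
    intro z
    rw [hρ, sub_self, norm_zero, mul_zero, Real.sqrt_zero,
      min_eq_right (by positivity : (0:ℝ) ≤ 2 * sκ), mul_zero]
  -- Part (i)
  have part1 : ∀ u > 0, (N u : ℝ) ≤ (1 + c^2 / u^2) ^ r := by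
    intro u hu
    set ε := 3 * u^2 / (16 * ν^2 * Lk) with hεdef
    have hε : 0 < ε := by positivity
    obtain ⟨C, hCZ, hcov, hcard⟩ := exists_cover Z hRpos hε hbnd
    have hkey : ν * Real.sqrt (8/3) * Real.sqrt (2 * Lk * ε) = u := by
      rw [mul_assoc, ← Real.sqrt_mul (by norm_num)]
      have harg : (8:ℝ)/3 * (2 * Lk * ε) = (u / ν)^2 := by
        rw [hεdef]; field_simp; ring
      rw [harg, Real.sqrt_sq (by positivity)]
      field_simp
    have hcovρ : ∀ z ∈ Z, ∃ c' ∈ C, ρ z c' ≤ u := by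
      intro z hz
      obtain ⟨c', hc', hd⟩ := hcov z hz
      refine ⟨c', hc', ?_⟩
      rw [hρ]
      have h2 : Real.sqrt (2 * Lk * ‖z - c'‖) ≤ Real.sqrt (2 * Lk * ε) := by
        apply Real.sqrt_le_sqrt
        have hnd : ‖z - c'‖ ≤ ε := by rw [← dist_eq_norm]; exact hd
        nlinarith
      calc ν * Real.sqrt (8/3) * min (2 * sκ) (Real.sqrt (2 * Lk * ‖z - c'‖))
          ≤ ν * Real.sqrt (8/3) * Real.sqrt (2 * Lk * ε) := by
            apply mul_le_mul_of_nonneg_left ((min_le_right _ _).trans h2) (by positivity)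
        _ = u := hkey
    have hNle : N u ≤ C.card := by
      rw [hN]; exact Nat.sInf_le ⟨C, hCZ, rfl, hcovρ⟩
    have hfr : (1 + 2 * R / ε : ℝ) = 1 + c^2 / u^2 := by
      have hc2 : c^2 = ν^2 * (32 * R * Lk / 3) := by
        rw [hc, mul_pow, Real.sq_sqrt (by positivity)]
      rw [hc2, hεdef]; field_simp; ring
    calc (N u : ℝ) ≤ (C.card : ℝ) := by exact_mod_cast hNle
      _ ≤ (1 + 2 * R / ε) ^ finrank ℝ (Submodule.span ℝ
            (Z : Set (EuclideanSpace ℝ (Fin d)))) := hcard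
      _ = (1 + c^2 / u^2) ^ r := by
          rw [hfr, hr, rank_eq_finrank_span_finset]
  -- Part (ii)
  have hsqrt83 : Real.sqrt (32/3) = 2 * Real.sqrt (8/3) := by
    rw [show (32:ℝ)/3 = 2^2 * (8/3) by norm_num, Real.sqrt_mul (by positivity),
      Real.sqrt_sq (by norm_num)]
  have part2 : diam ≤ D := by
    obtain ⟨z, hz, z', hz', hdval⟩ := hdiam.1
    rw [hdval, hρ, hD]
    apply le_min
    · have hzz : ‖z - z'‖ ≤ 2 * R := by
        have h1 := hbnd z hz
        have h2 := hbnd z' hz'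
        calc ‖z - z'‖ ≤ ‖z‖ + ‖z'‖ := norm_sub_le _ _
          _ ≤ 2 * R := by linarith
      calc ν * Real.sqrt (8/3) * min (2 * sκ) (Real.sqrt (2 * Lk * ‖z - z'‖))
          ≤ ν * Real.sqrt (8/3) * Real.sqrt (2 * Lk * (2 * R)) := by
            apply mul_le_mul_of_nonneg_left
              ((min_le_right _ _).trans (Real.sqrt_le_sqrt (by nlinarith))) (by positivity)
        _ = c := by
            rw [hc, mul_assoc, ← Real.sqrt_mul (by norm_num)]
            congr 2
            ring
    · calc ν * Real.sqrt (8/3) * min (2 * sκ) (Real.sqrt (2 * Lk * ‖z - z'‖))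
          ≤ ν * Real.sqrt (8/3) * (2 * sκ) := by
            apply mul_le_mul_of_nonneg_left (min_le_left _ _) (by positivity)
        _ = ν * Real.sqrt (32/3) * sκ := by rw [hsqrt83]; ring
  refine ⟨part1, part2, ?_⟩
  -- Part (iii)
  have hdiam0 : 0 ≤ diam := by
    obtain ⟨z0, hz0⟩ := hZ
    have h0 : (0:ℝ) ∈ {t : ℝ | ∃ z ∈ Z, ∃ z' ∈ Z, t = ρ z z'} :=
      ⟨z0, hz0, z0, hz0, (hρself z0).symm⟩
    exact hdiam.2 h0
  have hr1 : 1 ≤ r := by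
    rw [hr, rank_eq_finrank_span_finset]
    obtain ⟨z, hz, hzval⟩ := Finset.exists_mem_eq_sup' hZ fun z => ‖z‖
    have hzne : z ≠ 0 := by
      intro h
      rw [h, norm_zero] at hzval
      rw [hR, hzval] at hRpos
      exact lt_irrefl 0 hRpos
    haveI : Nontrivial (Submodule.span ℝ (Z : Set (EuclideanSpace ℝ (Fin d)))) :=
      ⟨⟨⟨z, Submodule.subset_span hz⟩, 0, by simp [Subtype.ext_iff, hzne]⟩⟩
    exact Module.finrank_pos
  have hrR : (0:ℝ) < r := by exact_mod_cast hr1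
  obtain ⟨L, hLdef⟩ : ∃ L, L = Real.log (Real.sqrt 3 * c) := ⟨_, rfl⟩
  obtain ⟨A, hAdef⟩ : ∃ A, A = 2 * (r:ℝ) * Real.log (Real.sqrt 3 * Real.exp 1 * c / D) := ⟨_, rfl⟩
  have hsq3 : (1:ℝ) < Real.sqrt 3 := by
    rw [show (1:ℝ) = Real.sqrt 1 by simp]
    exact Real.sqrt_lt_sqrt (by norm_num) (by norm_num)
  have he2 : (2:ℝ) ≤ Real.exp 1 := by nlinarith [Real.add_one_le_exp 1]
  have hA0 : 0 < A := by
    rw [hAdef]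
    apply mul_pos (mul_pos two_pos hrR)
    apply Real.log_pos
    rw [lt_div_iff₀ hD0]
    have h0 : (2:ℝ) ≤ Real.sqrt 3 * Real.exp 1 := by nlinarith [hsq3, he2]
    have h1 : 2 * c ≤ Real.sqrt 3 * Real.exp 1 * c := by
      have := mul_le_mul_of_nonneg_right h0 hc0.le
      linarith
    linarith
  have hA_eq : A = 2 * (r:ℝ) * (L + 1 - Real.log D) := by
    rw [hAdef, hLdef]
    congr 1
    have h1 : Real.sqrt 3 * Real.exp 1 * c / D = (Real.sqrt 3 * c) * Real.exp 1 / D := by ring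
    rw [h1, Real.log_div (by positivity : (0:ℝ) < Real.sqrt 3 * c * Real.exp 1).ne' hD0.ne',
      Real.log_mul (by positivity : (0:ℝ) < Real.sqrt 3 * c).ne' (Real.exp_ne_zero 1), Real.log_exp]
  obtain ⟨t, htdef⟩ : ∃ t, t = Real.sqrt A := ⟨_, rfl⟩
  have ht0 : 0 < t := htdef ▸ Real.sqrt_pos.2 hA0
  have ht2 : t^2 = A := by rw [htdef]; exact Real.sq_sqrt hA0.le
  obtain ⟨K1, hK1def⟩ : ∃ K1, K1 = t/2 + (r:ℝ) * L / t := ⟨_, rfl⟩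
  obtain ⟨K2, hK2def⟩ : ∃ K2, K2 = (r:ℝ) / t := ⟨_, rfl⟩
  -- pointwise bound
  have hpoint : ∀ u ∈ Set.Ioc (0:ℝ) diam,
      Real.sqrt (Real.log (1 + (N u : ℝ))) ≤ K1 - K2 * Real.log u := by
    intro u hu
    have hu0 : 0 < u := hu.1
    have huD : u ≤ D := hu.2.trans part2
    have huc : u ≤ c := huD.trans hDc
    have hNu := part1 u hu0
    have hcu : 1 ≤ c^2 / u^2 := by
      rw [le_div_iff₀ (by positivity : (0:ℝ) < u^2), one_mul]
      exact pow_le_pow_left₀ hu0.le huc 2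
    have hx : (0:ℝ) ≤ c^2 / u^2 := by positivity
    have hstep : 1 + (N u : ℝ) ≤ ((Real.sqrt 3 * c / u)^2) ^ r := by
      have h2 := one_add_pow_le hx hr1
      have h3 : (2 + c^2/u^2)^r ≤ (3 * (c^2/u^2))^r :=
        pow_le_pow_left₀ (by linarith) (by linarith) r
      have h4 : (3 * (c^2/u^2)) = (Real.sqrt 3 * c / u)^2 := by
        rw [div_pow, mul_pow, Real.sq_sqrt (by norm_num : (0:ℝ) ≤ 3)]
        ring
      rw [← h4]
      linarith
    have hloglog : Real.log (1 + (N u : ℝ)) ≤ 2 * (r:ℝ) * (L - Real.log u) := by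
      have hpos : (0:ℝ) < 1 + (N u : ℝ) := by positivity
      have h5 := Real.log_le_log hpos hstep
      rw [← pow_mul, Real.log_pow] at h5
      have hq : Real.log (Real.sqrt 3 * c / u) = L - Real.log u := by
        rw [hLdef, Real.log_div (by positivity : (0:ℝ) < Real.sqrt 3 * c).ne' hu0.ne']
      rw [hq] at h5
      calc Real.log (1 + (N u : ℝ)) ≤ ((2 * r : ℕ) : ℝ) * (L - Real.log u) := h5
        _ = 2 * (r:ℝ) * (L - Real.log u) := by push_cast; ring
    have hh0 : 0 ≤ 2 * (r:ℝ) * (L - Real.log u) := by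
      have : (0:ℝ) ≤ Real.log (1 + (N u : ℝ)) :=
        Real.log_nonneg (by linarith [(Nat.cast_nonneg (N u) : (0:ℝ) ≤ (N u : ℝ))])
      linarith
    calc Real.sqrt (Real.log (1 + (N u : ℝ)))
        ≤ Real.sqrt (2 * (r:ℝ) * (L - Real.log u)) := Real.sqrt_le_sqrt hloglog
      _ ≤ Real.sqrt A / 2 + (2 * (r:ℝ) * (L - Real.log u)) / (2 * Real.sqrt A) :=
          sqrt_le_half_add hA0 hh0
      _ = K1 - K2 * Real.log u := by
          rw [hK1def, hK2def, ← htdef]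
          field_simp
          ring
  -- integrability of LHS integrand
  have hcovZ : ∀ a : ℝ, 0 ≤ a → Z.card ∈ {k : ℕ |
      ∃ C : Finset (EuclideanSpace ℝ (Fin d)), C ⊆ Z ∧ C.card = k ∧
        ∀ z ∈ Z, ∃ c' ∈ C, ρ z c' ≤ a} := by
    intro a ha
    exact ⟨Z, Finset.Subset.refl Z, rfl, fun z hz => ⟨z, hz, (hρself z).le.trans ha⟩⟩
  set Nm : ℝ → ℕ := fun u => N (max u 0) with hNmdef
  have hanti : Antitone fun u => ((Nm u : ℝ)) := by
    intro a b hab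
    have h1 : N (max b 0) ≤ N (max a 0) := by
      rw [hN, hN]
      have hmem := Nat.sInf_mem (⟨Z.card, hcovZ (max a 0) (le_max_right _ _)⟩ :
        Set.Nonempty {k : ℕ | ∃ C : Finset (EuclideanSpace ℝ (Fin d)), C ⊆ Z ∧ C.card = k ∧
          ∀ z ∈ Z, ∃ c' ∈ C, ρ z c' ≤ max a 0})
      obtain ⟨C, hCZ, hCcard, hCcov⟩ := hmem
      apply Nat.sInf_le
      refine ⟨C, hCZ, hCcard, fun z hz => ?_⟩
      obtain ⟨c', hc', hle⟩ := hCcov z hz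
      exact ⟨c', hc', hle.trans (max_le_max hab le_rfl)⟩
    show ((N (max b 0) : ℝ)) ≤ ((N (max a 0) : ℝ))
    exact_mod_cast h1
  have hmeasNm : Measurable fun u => ((Nm u : ℝ)) := hanti.measurable
  have hmeasf : Measurable fun u => Real.sqrt (Real.log (1 + (Nm u : ℝ))) :=
    Real.continuous_sqrt.measurable.comp
      (Real.measurable_log.comp (measurable_const.add hmeasNm))
  have hNmbd : ∀ u : ℝ, Nm u ≤ Z.card := by
    intro u
    rw [hNmdef]
    simp only
    rw [hN]
    exact Nat.sInf_le (hcovZ _ (le_max_right _ _))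
  have hfint : IntervalIntegrable
      (fun u => Real.sqrt (Real.log (1 + (N u : ℝ)))) volume 0 diam := by
    rw [intervalIntegrable_iff_integrableOn_Ioc_of_le hdiam0]
    have hfin : IsFiniteMeasure (volume.restrict (Set.Ioc (0:ℝ) diam)) := by
      constructor
      rw [Measure.restrict_apply_univ, Real.volume_Ioc]
      exact ENNReal.ofReal_lt_top
    have hfm : IntegrableOn (fun u => Real.sqrt (Real.log (1 + (Nm u : ℝ))))
        (Set.Ioc (0:ℝ) diam) volume := by
      refine ⟨hmeasf.aestronglyMeasurable, ?_⟩
      apply HasFiniteIntegral.of_bounded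
        (C := Real.sqrt (Real.log (1 + (Z.card : ℝ))))
      apply ae_of_all
      intro u
      rw [Real.norm_eq_abs, abs_of_nonneg (Real.sqrt_nonneg _)]
      apply Real.sqrt_le_sqrt
      apply Real.log_le_log (by positivity)
      have := hNmbd u
      have : (Nm u : ℝ) ≤ (Z.card : ℝ) := by exact_mod_cast this
      linarith
    apply hfm.congr_fun _ measurableSet_Ioc
    intro u hu
    simp only [hNmdef, max_eq_left hu.1.le]
  have hφint : IntervalIntegrable (fun u => K1 - K2 * Real.log u) volume 0 D :=
    intervalIntegrable_const.sub ((intervalIntegrable_log0 hD0).const_mul K2)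
  have hsubset1 : Set.uIcc (0:ℝ) diam ⊆ Set.uIcc (0:ℝ) D := by
    rw [Set.uIcc_of_le hdiam0, Set.uIcc_of_le hD0.le]
    exact Set.Icc_subset_Icc le_rfl part2
  have hsubset2 : Set.uIcc diam D ⊆ Set.uIcc (0:ℝ) D := by
    rw [Set.uIcc_of_le part2, Set.uIcc_of_le hD0.le]
    exact Set.Icc_subset_Icc hdiam0 le_rfl
  have hstep1 : (∫ u in (0:ℝ)..diam, Real.sqrt (Real.log (1 + (N u : ℝ))))
      ≤ ∫ u in (0:ℝ)..diam, (K1 - K2 * Real.log u) := by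
    apply intervalIntegral.integral_mono_ae_restrict hdiam0 hfint
      (hφint.mono_set hsubset1)
    have hzero : ∀ᵐ u ∂(volume.restrict (Set.Icc (0:ℝ) diam)), u ≠ 0 := by
      rw [ae_iff]
      have hsub : {u : ℝ | ¬ u ≠ 0} = {(0:ℝ)} := by ext x; simp
      rw [hsub, Measure.restrict_apply (measurableSet_singleton 0)]
      exact measure_mono_null Set.inter_subset_left Real.volume_singleton
    filter_upwards [ae_restrict_mem measurableSet_Icc, hzero] with u hu hu0
    exact hpoint u ⟨lt_of_le_of_ne hu.1 (Ne.symm hu0), hu.2⟩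
  have hstep2 : (∫ u in (0:ℝ)..diam, (K1 - K2 * Real.log u))
      ≤ ∫ u in (0:ℝ)..D, (K1 - K2 * Real.log u) := by
    have hsplit := intervalIntegral.integral_add_adjacent_intervals
      (f := fun u => K1 - K2 * Real.log u) (μ := volume) (a := (0:ℝ)) (b := diam) (c := D)
      (hφint.mono_set hsubset1) (hφint.mono_set hsubset2)
    rw [← hsplit]
    have hnn : 0 ≤ ∫ u in diam..D, (K1 - K2 * Real.log u) := by
      rw [intervalIntegral.integral_of_le part2]
      apply setIntegral_nonneg measurableSet_Ioc
      intro u hu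
      have hu0 : 0 < u := lt_of_le_of_lt hdiam0 hu.1
      have hlogle : Real.log u ≤ L := by
        rw [hLdef]
        apply Real.log_le_log hu0
        have h0 : c ≤ Real.sqrt 3 * c := by nlinarith [hsq3, hc0]
        linarith [hu.2, hDc]
      have hK2nn : 0 ≤ K2 := by rw [hK2def]; positivity
      have h1 : K2 * Real.log u ≤ K2 * L := mul_le_mul_of_nonneg_left hlogle hK2nn
      have h2 : K1 - K2 * L = t/2 := by
        rw [hK1def, hK2def]
        field_simp
        ring
      linarith [h1, h2, ht0.le]
    linarith
  have hstep3 : (∫ u in (0:ℝ)..D, (K1 - K2 * Real.log u)) = D * t := by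
    rw [intervalIntegral.integral_sub intervalIntegrable_const
      ((intervalIntegrable_log0 hD0).const_mul K2),
      intervalIntegral.integral_const, intervalIntegral.integral_const_mul,
      integral_log0 hD0]
    have hA2 : t^2 = 2 * (r:ℝ) * (L + 1 - Real.log D) := ht2.trans hA_eq
    rw [hK1def, hK2def]
    simp only [smul_eq_mul, sub_zero]
    have expand : D * (t/2 + (r:ℝ)*L/t) - (r:ℝ)/t * (D*Real.log D - D)
        = D / (2*t) * (t^2 + 2*(r:ℝ)*(L + 1 - Real.log D)) := by
      field_simp
      ring
    rw [expand, ← hA2]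
    field_simp
    ring
  calc (∫ u in (0:ℝ)..diam, Real.sqrt (Real.log (1 + (N u : ℝ))))
      ≤ ∫ u in (0:ℝ)..diam, (K1 - K2 * Real.log u) := hstep1
    _ ≤ ∫ u in (0:ℝ)..D, (K1 - K2 * Real.log u) := hstep2
    _ = D * t := hstep3
    _ = D * Real.sqrt (2 * (r : ℝ) * Real.log (Real.sqrt 3 * Real.exp 1 * c / D)) := by
        rw [htdef, hAdef]

end
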